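/- Let D be a 3×3 real symmetric matrix with zero diagonal and entries D_{12}, D_{13}, D_{23}, and assume that at least two of these three entries are nonzero (equivalently, the graph G_D on three vertices is connected). Then the noncommutative distance satisfies d^D(1,2) = sqrt( (D_{13}² + D_{23}²) / (D_{12}²D_{13}² + D_{12}²D_{23}² + D_{23}²D_{13}²) ). -/

import Mathlib

open scoped ENNReal
open Complex

/-- The operator norm on square matrices induced by the Euclidean (ℓ²) norm. -/
noncomputable def opNorm {ι : Type*} [Finite ι] (M : Matrix ι ι ℂ) : ℝ :=
  letI := Fintype.ofFinite ι
  letI := Classical.decEq ι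
  ‖Matrix.toEuclideanCLM (𝕜 := ℂ) M‖

/-- The commutator `[D, π(a)]` of a matrix with the diagonal matrix of `a`. -/
noncomputable def commD {ι : Type*} [Finite ι] (D : Matrix ι ι ℂ) (a : ι → ℂ) : Matrix ι ι ℂ :=
  letI := Fintype.ofFinite ι
  letI := Classical.decEq ι
  D * Matrix.diagonal a - Matrix.diagonal a * D

/-- Connes' noncommutative distance associated to the Dirac operator `D`. -/
noncomputable def ncDist {ι : Type*} [Finite ι] (D : Matrix ι ι ℂ) (i j : ι) : ℝ≥0∞ :=
  ⨆ (a : ι → ℂ) (_ : opNorm (commD D a) ≤ 1), ENNReal.ofReal ‖a i - a j‖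

/-- The weight of an edge: the inverse of `|D i j|` (infinite if `D i j = 0`). -/
noncomputable def eWeight {ι : Type*} (D : Matrix ι ι ℂ) (u v : ι) : ℝ≥0∞ :=
  (ENNReal.ofReal ‖D u v‖)⁻¹

/-- Adjacency in the graph `G_D`. -/
def Adjac {ι : Type*} (D : Matrix ι ι ℂ) (u v : ι) : Prop := u ≠ v ∧ D u v ≠ 0

/-- The length of a walk `i :: p` computed with weights `eWeight D`. -/
noncomputable def walkLength {ι : Type*} (D : Matrix ι ι ℂ) : ι → List ι → ℝ≥0∞
  | _, [] => 0
  | u, v :: rest => eWeight D u v + walkLength D v rest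

/-- `i :: p` is a walk from `i` to `j` in the graph `G_D`. -/
def IsWalk {ι : Type*} (D : Matrix ι ι ℂ) (i j : ι) (p : List ι) : Prop :=
  List.Chain (Adjac D) i p ∧ (i :: p).getLast (List.cons_ne_nil _ _) = j

/-- `i` and `j` lie in the same connected component of `G_D`. -/
def Conn {ι : Type*} (D : Matrix ι ι ℂ) (i j : ι) : Prop := ∃ p, IsWalk D i j p

/-- The geodesic (weighted shortest-path) distance on `G_D`. -/
noncomputable def gDist {ι : Type*} (D : Matrix ι ι ℂ) (i j : ι) : ℝ≥0∞ :=
  ⨅ (p : List ι) (_ : IsWalk D i j p), walkLength D i p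

lemma opNorm_eq (M : Matrix (Fin 3) (Fin 3) ℂ) :
    opNorm M = ‖Matrix.toEuclideanCLM (𝕜 := ℂ) M‖ := by
  unfold opNorm
  have h1 : (Fintype.ofFinite (Fin 3)) = Fin.fintype 3 := Subsingleton.elim _ _
  have h2 : (Classical.decEq (Fin 3)) = instDecidableEqFin 3 := Subsingleton.elim _ _
  rw [h1, h2]

lemma norm_sq_euc (v : Fin 3 → ℂ) :
    ‖(WithLp.equiv 2 (Fin 3 → ℂ)).symm v‖ ^ 2 = normSq (v 0) + normSq (v 1) + normSq (v 2) := by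
  rw [EuclideanSpace.norm_eq, Real.sq_sqrt (by positivity)]
  simp [Fin.sum_univ_three, Complex.sq_norm]

lemma mulVec_M (x y z : ℂ) (w : Fin 3 → ℂ) :
    (!![0, x, y; -x, 0, z; -y, -z, 0]).mulVec w
      = ![x*w 1 + y*w 2, -x*w 0 + z*w 2, -y*w 0 - z*w 1] := by
  funext i
  fin_cases i <;>
    simp [Matrix.mulVec, dotProduct, Fin.sum_univ_three, Matrix.vecHead, Matrix.vecTail] <;> ring

lemma key_id (x y z w0 w1 w2 : ℂ) :
    normSq (x*w1 + y*w2) + normSq (-x*w0 + z*w2) + normSq (-y*w0 - z*w1)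
      + normSq ((starRingEnd ℂ) z * w0 - (starRingEnd ℂ) y * w1 + (starRingEnd ℂ) x * w2)
    = (normSq x + normSq y + normSq z) * (normSq w0 + normSq w1 + normSq w2) := by
  simp only [Complex.normSq_apply, Complex.add_re, Complex.add_im, Complex.sub_re,
    Complex.sub_im, Complex.mul_re, Complex.mul_im, Complex.neg_re, Complex.neg_im,
    Complex.conj_re, Complex.conj_im]
  ring

lemma clm_apply (M : Matrix (Fin 3) (Fin 3) ℂ) (w : Fin 3 → ℂ) :
    Matrix.toEuclideanCLM (𝕜 := ℂ) M ((WithLp.equiv 2 (Fin 3 → ℂ)).symm w)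
      = (WithLp.equiv 2 (Fin 3 → ℂ)).symm (M.mulVec w) := by
  exact Matrix.toEuclideanCLM_toLp M w

lemma opNorm_upper (x y z : ℂ) :
    opNorm !![0, x, y; -x, 0, z; -y, -z, 0]
      ≤ Real.sqrt (normSq x + normSq y + normSq z) := by
  rw [opNorm_eq]
  apply ContinuousLinearMap.opNorm_le_bound _ (Real.sqrt_nonneg _)
  intro w
  obtain ⟨w', rfl⟩ : ∃ w' : Fin 3 → ℂ, (WithLp.equiv 2 (Fin 3 → ℂ)).symm w' = w :=
    ⟨WithLp.equiv 2 (Fin 3 → ℂ) w, rfl⟩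
  rw [clm_apply, mulVec_M]
  have h1 := norm_sq_euc ![x*w' 1 + y*w' 2, -x*w' 0 + z*w' 2, -y*w' 0 - z*w' 1]
  have h2 := norm_sq_euc w'
  have hid := key_id x y z (w' 0) (w' 1) (w' 2)
  have hs : (0:ℝ) ≤ normSq x + normSq y + normSq z :=
    add_nonneg (add_nonneg (normSq_nonneg _) (normSq_nonneg _)) (normSq_nonneg _)
  have hsq : Real.sqrt (normSq x + normSq y + normSq z) ^ 2
      = normSq x + normSq y + normSq z := Real.sq_sqrt hs
  have hnn1 : (0:ℝ) ≤ ‖(WithLp.equiv 2 (Fin 3 → ℂ)).symm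
      ![x*w' 1 + y*w' 2, -x*w' 0 + z*w' 2, -y*w' 0 - z*w' 1]‖ := norm_nonneg _
  have hnn2 : (0:ℝ) ≤ ‖(WithLp.equiv 2 (Fin 3 → ℂ)).symm w'‖ := norm_nonneg _
  have hnsq := normSq_nonneg ((starRingEnd ℂ) z * w' 0 - (starRingEnd ℂ) y * w' 1 + (starRingEnd ℂ) x * w' 2)
  simp only [Matrix.cons_val_zero, Matrix.cons_val_one, Matrix.head_cons,
    Matrix.cons_val_two, Matrix.tail_cons] at h1
  nlinarith [Real.sqrt_nonneg (normSq x + normSq y + normSq z),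
    mul_nonneg (Real.sqrt_nonneg (normSq x + normSq y + normSq z)) hnn2]

lemma s_le_one_aux (x y z : ℂ) (h : opNorm !![0, x, y; -x, 0, z; -y, -z, 0] ≤ 1)
    (w : Fin 3 → ℂ)
    (horth : (starRingEnd ℂ) z * w 0 - (starRingEnd ℂ) y * w 1 + (starRingEnd ℂ) x * w 2 = 0)
    (hw : 0 < normSq (w 0) + normSq (w 1) + normSq (w 2)) :
    normSq x + normSq y + normSq z ≤ 1 := by
  have hle : ‖(WithLp.equiv 2 (Fin 3 → ℂ)).symm
      ((!![0, x, y; -x, 0, z; -y, -z, 0]).mulVec w)‖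
      ≤ ‖(WithLp.equiv 2 (Fin 3 → ℂ)).symm w‖ := by
    rw [← clm_apply]
    calc _ ≤ ‖Matrix.toEuclideanCLM (𝕜 := ℂ) !![0, x, y; -x, 0, z; -y, -z, 0]‖
        * ‖(WithLp.equiv 2 (Fin 3 → ℂ)).symm w‖ := ContinuousLinearMap.le_opNorm _ _
    _ ≤ 1 * ‖(WithLp.equiv 2 (Fin 3 → ℂ)).symm w‖ := by
        apply mul_le_mul_of_nonneg_right _ (norm_nonneg _)
        rw [← opNorm_eq]; exact h
    _ = _ := one_mul _
  rw [mulVec_M] at hle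
  have h1 := norm_sq_euc ![x*w 1 + y*w 2, -x*w 0 + z*w 2, -y*w 0 - z*w 1]
  have h2 := norm_sq_euc w
  have hid := key_id x y z (w 0) (w 1) (w 2)
  rw [horth] at hid
  simp only [Complex.normSq_zero, add_zero] at hid
  simp only [Matrix.cons_val_zero, Matrix.cons_val_one, Matrix.head_cons,
    Matrix.cons_val_two, Matrix.tail_cons] at h1
  nlinarith [norm_nonneg ((WithLp.equiv 2 (Fin 3 → ℂ)).symm w),
    norm_nonneg ((WithLp.equiv 2 (Fin 3 → ℂ)).symm
      ![x*w 1 + y*w 2, -x*w 0 + z*w 2, -y*w 0 - z*w 1])]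

lemma s_le_one (x y z : ℂ) (h : opNorm !![0, x, y; -x, 0, z; -y, -z, 0] ≤ 1) :
    normSq x + normSq y + normSq z ≤ 1 := by
  by_cases hyz : y = 0 ∧ z = 0
  · by_cases hx : x = 0
    · simp [hyz.1, hyz.2, hx]
    · apply s_le_one_aux x y z h ![(starRingEnd ℂ) x, 0, 0]
      · simp [hyz.1, hyz.2]
      · simpa [Complex.normSq_conj] using Complex.normSq_pos.2 hx
  · apply s_le_one_aux x y z h ![(starRingEnd ℂ) y, (starRingEnd ℂ) z, 0]
    · simp; ring
    · rw [not_and_or] at hyz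
      have hpos : 0 < normSq y + normSq z := by
        rcases hyz with hy | hz
        · nlinarith [Complex.normSq_pos.2 hy, normSq_nonneg z]
        · nlinarith [Complex.normSq_pos.2 hz, normSq_nonneg y]
      simpa [Complex.normSq_conj] using hpos

lemma commD_eq (d12 d13 d23 : ℝ) (a : Fin 3 → ℂ) :
    commD !![0, (d12 : ℂ), (d13 : ℂ); (d12 : ℂ), 0, (d23 : ℂ); (d13 : ℂ), (d23 : ℂ), 0] a
      = !![0, (d12:ℂ) * (a 1 - a 0), (d13:ℂ) * (a 2 - a 0);
           -((d12:ℂ) * (a 1 - a 0)), 0, (d23:ℂ) * (a 2 - a 1);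
           -((d13:ℂ) * (a 2 - a 0)), -((d23:ℂ) * (a 2 - a 1)), 0] := by
  unfold commD
  have h1 : (Fintype.ofFinite (Fin 3)) = Fin.fintype 3 := Subsingleton.elim _ _
  have h2 : (Classical.decEq (Fin 3)) = instDecidableEqFin 3 := Subsingleton.elim _ _
  rw [h1, h2]
  ext i j
  fin_cases i <;> fin_cases j <;>
    simp [Matrix.mul_apply, Fin.sum_univ_three, Matrix.diagonal, Matrix.vecHead,
      Matrix.vecTail, Function.comp] <;> ring

set_option maxHeartbeats 2000000 in
theorem stmt7 (d12 d13 d23 : ℝ)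
    (h : (d12 ≠ 0 ∧ d13 ≠ 0) ∨ (d12 ≠ 0 ∧ d23 ≠ 0) ∨ (d13 ≠ 0 ∧ d23 ≠ 0)) :
    ncDist !![0, (d12 : ℂ), (d13 : ℂ); (d12 : ℂ), 0, (d23 : ℂ); (d13 : ℂ), (d23 : ℂ), 0] 0 1 =
      ENNReal.ofReal (Real.sqrt ((d13 ^ 2 + d23 ^ 2) /
        (d12 ^ 2 * d13 ^ 2 + d12 ^ 2 * d23 ^ 2 + d23 ^ 2 * d13 ^ 2))) := by
  set S := d13 ^ 2 + d23 ^ 2 with hSdef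
  set Q := d12 ^ 2 * d13 ^ 2 + d12 ^ 2 * d23 ^ 2 + d23 ^ 2 * d13 ^ 2 with hQdef
  have sq_pos : ∀ r : ℝ, r ≠ 0 → 0 < r ^ 2 := fun r hr =>
    lt_of_le_of_ne (sq_nonneg r) (Ne.symm (pow_ne_zero 2 hr))
  have hS : 0 < S := by
    rcases h with ⟨h1, h2⟩ | ⟨h1, h2⟩ | ⟨h1, h2⟩
    · nlinarith [sq_pos d13 h2, sq_nonneg d23]
    · nlinarith [sq_pos d23 h2, sq_nonneg d13]
    · nlinarith [sq_pos d13 h1, sq_nonneg d23]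
  have hQ : 0 < Q := by
    rcases h with ⟨h1, h2⟩ | ⟨h1, h2⟩ | ⟨h1, h2⟩
    · nlinarith [mul_pos (sq_pos d12 h1) (sq_pos d13 h2), sq_nonneg (d12*d23), sq_nonneg (d23*d13)]
    · nlinarith [mul_pos (sq_pos d12 h1) (sq_pos d23 h2), sq_nonneg (d12*d13), sq_nonneg (d23*d13)]
    · nlinarith [mul_pos (sq_pos d13 h1) (sq_pos d23 h2), sq_nonneg (d12*d13), sq_nonneg (d12*d23)]
  set R := Real.sqrt (S / Q) with hRdef
  have hRnn : 0 ≤ R := Real.sqrt_nonneg _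
  have hR2 : R ^ 2 = S / Q := Real.sq_sqrt (le_of_lt (div_pos hS hQ))
  unfold ncDist
  apply le_antisymm
  · apply iSup₂_le
    intro a ha
    rw [commD_eq d12 d13 d23 a] at ha
    have hs := s_le_one _ _ _ ha
    apply ENNReal.ofReal_le_ofReal
    set u := a 1 - a 0 with hu
    set v := a 2 - a 0 with hv
    have hz : a 2 - a 1 = v - u := by rw [hu, hv]; ring
    rw [hz] at hs
    set t := ‖u‖ with ht
    set p := ‖v‖ with hp
    set q := ‖v - u‖ with hq
    have habs : ‖a 0 - a 1‖ = t := by rw [ht, hu, norm_sub_rev]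
    have htn : 0 ≤ t := norm_nonneg _
    have hpn : 0 ≤ p := norm_nonneg _
    have hqn : 0 ≤ q := norm_nonneg _
    have htpq : t ≤ p + q := by
      calc t = ‖v - (v - u)‖ := by rw [ht]; congr 1; ring
      _ ≤ p + q := norm_sub_le _ _
    have hsr : d12 ^ 2 * t ^ 2 + d13 ^ 2 * p ^ 2 + d23 ^ 2 * q ^ 2 ≤ 1 := by
      have e1 : normSq ((d12:ℂ) * u) = d12 ^ 2 * t ^ 2 := by
        rw [map_mul, Complex.normSq_ofReal, ht, ← Complex.sq_norm]; ring
      have e2 : normSq ((d13:ℂ) * v) = d13 ^ 2 * p ^ 2 := by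
        rw [map_mul, Complex.normSq_ofReal, hp, ← Complex.sq_norm]; ring
      have e3 : normSq ((d23:ℂ) * (v - u)) = d23 ^ 2 * q ^ 2 := by
        rw [map_mul, Complex.normSq_ofReal, hq, ← Complex.sq_norm]; ring
      rw [e1, e2, e3] at hs
      exact hs
    rw [habs]
    have ha1 : t ^ 2 ≤ (p + q) ^ 2 := by nlinarith
    have ha2 : d13 ^ 2 * d23 ^ 2 * (p + q) ^ 2 ≤ S * (d13 ^ 2 * p ^ 2 + d23 ^ 2 * q ^ 2) := by
      rw [hSdef]; nlinarith [sq_nonneg (d13 ^ 2 * p - d23 ^ 2 * q)]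
    have ha3 : Q * t ^ 2 ≤ S := by
      have hb1 : d13 ^ 2 * d23 ^ 2 * t ^ 2 ≤ d13 ^ 2 * d23 ^ 2 * (p + q) ^ 2 := by
        apply mul_le_mul_of_nonneg_left ha1 (by positivity)
      have hb2 : S * (d13 ^ 2 * p ^ 2 + d23 ^ 2 * q ^ 2) ≤ S * (1 - d12 ^ 2 * t ^ 2) := by
        apply mul_le_mul_of_nonneg_left (by linarith) (le_of_lt hS)
      have : Q * t ^ 2 = S * (d12 ^ 2 * t ^ 2) + d13 ^ 2 * d23 ^ 2 * t ^ 2 := by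
        rw [hSdef, hQdef]; ring
      nlinarith
    have ht2 : t ^ 2 ≤ S / Q := by
      rw [le_div_iff₀ hQ]; nlinarith
    calc t = Real.sqrt (t ^ 2) := (Real.sqrt_sq htn).symm
    _ ≤ Real.sqrt (S / Q) := Real.sqrt_le_sqrt ht2
    _ = R := rfl
  · set v0 := R * d23 ^ 2 / S with hv0def
    set a : Fin 3 → ℂ := ![0, (R:ℂ), (v0:ℂ)] with hadef
    have ha0 : a 0 = 0 := rfl
    have ha1 : a 1 = (R:ℂ) := rfl
    have ha2 : a 2 = (v0:ℂ) := rfl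
    have hcond : opNorm (commD !![0, (d12 : ℂ), (d13 : ℂ); (d12 : ℂ), 0, (d23 : ℂ);
        (d13 : ℂ), (d23 : ℂ), 0] a) ≤ 1 := by
      rw [commD_eq]
      refine le_trans (opNorm_upper _ _ _) ?_
      have e1 : a 1 - a 0 = ((R:ℝ) : ℂ) := by rw [ha0, ha1]; ring
      have e2 : a 2 - a 0 = ((v0:ℝ) : ℂ) := by rw [ha0, ha2]; ring
      have e3 : a 2 - a 1 = ((v0 - R : ℝ) : ℂ) := by rw [ha1, ha2]; push_cast; ring
      rw [e1, e2, e3]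
      have f1 : normSq ((d12:ℂ) * ((R:ℝ):ℂ)) = d12 ^ 2 * R ^ 2 := by
        rw [map_mul, Complex.normSq_ofReal, Complex.normSq_ofReal]; ring
      have f2 : normSq ((d13:ℂ) * ((v0:ℝ):ℂ)) = d13 ^ 2 * v0 ^ 2 := by
        rw [map_mul, Complex.normSq_ofReal, Complex.normSq_ofReal]; ring
      have f3 : normSq ((d23:ℂ) * ((v0 - R:ℝ):ℂ)) = d23 ^ 2 * (v0 - R) ^ 2 := by
        rw [map_mul, Complex.normSq_ofReal, Complex.normSq_ofReal]; ring
      rw [f1, f2, f3]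
      have hsum : d12 ^ 2 * R ^ 2 + d13 ^ 2 * v0 ^ 2 + d23 ^ 2 * (v0 - R) ^ 2 = 1 := by
        rw [hv0def]
        have hS0 : S ≠ 0 := ne_of_gt hS
        have hQ0 : Q ≠ 0 := ne_of_gt hQ
        have hQR : R ^ 2 * Q = S := by rw [hR2]; field_simp
        field_simp
        rw [hSdef, hQdef] at hQR
        linear_combination (d13 ^ 2 + d23 ^ 2) * hQR
      rw [hsum, Real.sqrt_one]
    refine le_trans ?_ (le_iSup₂_of_le a hcond le_rfl)
    apply le_of_eq
    congr 1
    rw [ha0, ha1]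
    rw [zero_sub, norm_neg, Complex.norm_real, Real.norm_eq_abs]
    exact (_root_.abs_of_nonneg hRnn).symm
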